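/- Let W' be the affine Weyl group of type B̃₂ with simple reflections r, s, t (rt = tr, (rs)⁴ = (st)⁴ = e). Then for every m ≥ 1, both r and t are in the left descent set and in the right descent set of the element w = rt(srt)^m; that is, l(rw) < l(w), l(tw) < l(w), l(wr) < l(w), and l(wt) < l(w). -/

import Mathlib

/-- The Coxeter matrix of affine type B̃₂ on generators `r = 0`, `s = 1`, `t = 2`,
with `m(r,t) = 2`, `m(r,s) = 4`, `m(s,t) = 4`. -/
def B2affMatrix : CoxeterMatrix (Fin 3) where
  M := !![1, 4, 2; 4, 1, 4; 2, 4, 1]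
  off_diagonal := by intro i i'; fin_cases i <;> fin_cases i' <;> simp

/-- The affine Weyl group of type B̃₂. -/
abbrev B2affGroup := B2affMatrix.Group

/-- The canonical Coxeter system on the affine Weyl group of type B̃₂. -/
def B2affCS : CoxeterSystem B2affMatrix B2affGroup := B2affMatrix.toCoxeterSystem

namespace B2aff

/-- The simple reflection `r`. -/
def r : B2affGroup := B2affCS.simple 0
/-- The simple reflection `s`. -/
def s : B2affGroup := B2affCS.simple 1
/-- The simple reflection `t`. -/
def t : B2affGroup := B2affCS.simple 2

end B2aff


/-! ### A permutation representation on `ℤ × ℤ`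

We realize the group as a reflection group acting on the plane: `r` is the reflection across
`x = 0`, `s` is the reflection across `x = y`, and `t` is the reflection across `y = 3`
(coordinates scaled by 3 so everything is integral).  The walls of the arrangement are
`x ∈ 3ℤ`, `y ∈ 3ℤ`, `x + y ∈ 6ℤ`, `x - y ∈ 6ℤ`, and the number of walls separating a point
of the orbit of the base point `(1, 2)` from the base point is a lower bound for the length. -/

def ρ : Equiv.Perm (ℤ × ℤ) :=
  ⟨fun p => (-p.1, p.2), fun p => (-p.1, p.2), fun p => by simp, fun p => by simp⟩
def σ' : Equiv.Perm (ℤ × ℤ) := Equiv.prodComm ℤ ℤ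
def τ : Equiv.Perm (ℤ × ℤ) :=
  ⟨fun p => (p.1, 6 - p.2), fun p => (p.1, 6 - p.2), fun p => by simp, fun p => by simp⟩

@[simp] lemma ρ_apply (p : ℤ × ℤ) : ρ p = (-p.1, p.2) := rfl
@[simp] lemma σ'_apply (p : ℤ × ℤ) : σ' p = (p.2, p.1) := rfl
@[simp] lemma τ_apply (p : ℤ × ℤ) : τ p = (p.1, 6 - p.2) := rfl

def fgen : Fin 3 → Equiv.Perm (ℤ × ℤ) := ![ρ, σ', τ]

set_option maxRecDepth 4000 in
theorem liftable : B2affMatrix.IsLiftable fgen := by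
  intro i j
  fin_cases i <;> fin_cases j <;>
    [ (show (ρ * ρ) ^ 1 = 1);
      (show (ρ * σ') ^ 4 = 1);
      (show (ρ * τ) ^ 2 = 1);
      (show (σ' * ρ) ^ 4 = 1);
      (show (σ' * σ') ^ 1 = 1);
      (show (σ' * τ) ^ 4 = 1);
      (show (τ * ρ) ^ 2 = 1);
      (show (τ * σ') ^ 4 = 1);
      (show (τ * τ) ^ 1 = 1)] <;>
    · ext p
      · simp [pow_succ, Equiv.Perm.mul_apply]; try ring
      · simp [pow_succ, Equiv.Perm.mul_apply]; try ring

/-- The permutation representation. -/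
def φ : B2affGroup →* Equiv.Perm (ℤ × ℤ) := B2affCS.lift ⟨fgen, liftable⟩

@[simp] lemma φ_simple (i : Fin 3) : φ (B2affCS.simple i) = fgen i :=
  B2affCS.lift_apply_simple liftable i

@[simp] lemma φ_r : φ B2aff.r = ρ := φ_simple 0
@[simp] lemma φ_s : φ B2aff.s = σ' := φ_simple 1
@[simp] lemma φ_t : φ B2aff.t = τ := φ_simple 2

/-- Genericity of a point: off all the walls. -/
def Gen (p : ℤ × ℤ) : Prop :=
  p.1 % 3 ≠ 0 ∧ p.2 % 3 ≠ 0 ∧ (p.1 + p.2) % 6 ≠ 0 ∧ (p.1 - p.2) % 6 ≠ 0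

/-- Number of walls separating `p` from the base point `(1, 2)`. -/
def Nw (p : ℤ × ℤ) : ℕ :=
  (p.1 / 3).natAbs + (p.2 / 3).natAbs + ((p.1 + p.2) / 6).natAbs + ((p.1 - p.2) / 6 + 1).natAbs

lemma step_ρ (p : ℤ × ℤ) (h : Gen p) : Gen (ρ p) ∧ Nw (ρ p) ≤ Nw p + 1 := by
  obtain ⟨x, y⟩ := p
  obtain ⟨h1, h2, h3, h4⟩ := h
  simp only [Gen, Nw, ρ_apply] at *
  refine ⟨⟨by omega, by omega, by omega, by omega⟩, ?_⟩
  have d1 : (-x) / 3 = -(x / 3) - 1 := by omega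
  have d2 : (-x + y) / 6 = -((x - y) / 6) - 1 := by omega
  have d3 : (-x - y) / 6 = -((x + y) / 6) - 1 := by omega
  rw [d1, d2, d3]
  generalize x / 3 = A
  generalize (x + y) / 6 = C
  generalize (x - y) / 6 = D
  omega

lemma step_σ (p : ℤ × ℤ) (h : Gen p) : Gen (σ' p) ∧ Nw (σ' p) ≤ Nw p + 1 := by
  obtain ⟨x, y⟩ := p
  obtain ⟨h1, h2, h3, h4⟩ := h
  simp only [Gen, Nw, σ'_apply] at *
  refine ⟨⟨by omega, by omega, by omega, by omega⟩, ?_⟩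
  have d2 : (y - x) / 6 = -((x - y) / 6) - 1 := by omega
  have hc : y + x = x + y := by ring
  rw [d2, hc]
  generalize (x - y) / 6 = D
  omega

lemma step_τ (p : ℤ × ℤ) (h : Gen p) : Gen (τ p) ∧ Nw (τ p) ≤ Nw p + 1 := by
  obtain ⟨x, y⟩ := p
  obtain ⟨h1, h2, h3, h4⟩ := h
  simp only [Gen, Nw, τ_apply] at *
  refine ⟨⟨by omega, by omega, by omega, by omega⟩, ?_⟩
  have d1 : (6 - y) / 3 = 1 - y / 3 := by omega
  have d2 : (x + (6 - y)) / 6 = (x - y) / 6 + 1 := by omega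
  have d3 : (x - (6 - y)) / 6 = (x + y) / 6 - 1 := by omega
  rw [d1, d2, d3]
  generalize y / 3 = B
  generalize (x + y) / 6 = C
  generalize (x - y) / 6 = D
  omega

/-- The key lower-bound invariant along any word. -/
lemma word_bound (ω : List (Fin 3)) :
    Gen (φ (B2affCS.wordProd ω) (1, 2)) ∧ Nw (φ (B2affCS.wordProd ω) (1, 2)) ≤ ω.length := by
  induction ω with
  | nil => exact ⟨⟨by norm_num, by norm_num, by norm_num, by norm_num⟩, by simp [Nw]⟩
  | cons i ω ih =>
    rw [B2affCS.wordProd_cons, map_mul, Equiv.Perm.mul_apply]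
    obtain ⟨hg, hn⟩ := ih
    set q := φ (B2affCS.wordProd ω) (1, 2) with hq
    rw [φ_simple]
    fin_cases i
    · exact ⟨(step_ρ q hg).1, by
        show Nw (ρ q) ≤ ω.length + 1
        have := (step_ρ q hg).2; omega⟩
    · exact ⟨(step_σ q hg).1, by
        show Nw (σ' q) ≤ ω.length + 1
        have := (step_σ q hg).2; omega⟩
    · exact ⟨(step_τ q hg).1, by
        show Nw (τ q) ≤ ω.length + 1
        have := (step_τ q hg).2; omega⟩

/-- Length lower bound via wall counting. -/
lemma length_ge (w : B2affGroup) : Nw (φ w (1, 2)) ≤ B2affCS.length w := by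
  obtain ⟨ω, hlen, hw⟩ := B2affCS.exists_reduced_word w
  rw [hw, show B2affCS.length (B2affCS.wordProd ω) = ω.length from hlen]
  exact (word_bound ω).2

namespace B2aff

lemma r_mul_r : r * r = 1 := B2affCS.simple_mul_simple_self 0
lemma t_mul_t : t * t = 1 := B2affCS.simple_mul_simple_self 2

lemma rt_comm : r * t = t * r := by
  have h : (r * t) * (r * t) = 1 := by
    have := B2affCS.simple_mul_simple_pow 0 2
    have h2 : B2affMatrix 0 2 = 2 := by decide
    rw [h2] at this
    simpa [pow_succ, mul_assoc, r, t] using this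
  have h1 : (r * t)⁻¹ = r * t := inv_eq_of_mul_eq_one_right h
  have h3 : (r * t) * (t * r) = 1 := by
    rw [mul_assoc, ← mul_assoc t t r, t_mul_t, one_mul, r_mul_r]
  have h4 : (r * t)⁻¹ = t * r := inv_eq_of_mul_eq_one_right h3
  rw [← h1, h4]

lemma length_r : B2affCS.length r = 1 := B2affCS.length_simple 0
lemma length_s : B2affCS.length s = 1 := B2affCS.length_simple 1
lemma length_t : B2affCS.length t = 1 := B2affCS.length_simple 2

lemma length_srt_pow (n : ℕ) : B2affCS.length ((s * r * t) ^ n) ≤ 3 * n := by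
  induction n with
  | zero => simp
  | succ n ih =>
    rw [pow_succ]
    calc B2affCS.length ((s * r * t) ^ n * (s * r * t))
        ≤ B2affCS.length ((s * r * t) ^ n) + B2affCS.length (s * r * t) :=
          B2affCS.length_mul_le _ _
      _ ≤ 3 * n + 3 := by
          have h1 : B2affCS.length (s * r * t) ≤ 3 := by
            calc B2affCS.length (s * r * t) ≤ B2affCS.length (s * r) + B2affCS.length t :=
                B2affCS.length_mul_le _ _
              _ ≤ (B2affCS.length s + B2affCS.length r) + B2affCS.length t := by
                  have := B2affCS.length_mul_le s r; omega
              _ = 3 := by rw [length_s, length_r, length_t]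
          omega
      _ = 3 * (n + 1) := by ring

lemma srt_apply (p : ℤ × ℤ) : (σ' * ρ * τ) p = (6 - p.2, -p.1) := by
  simp [Equiv.Perm.mul_apply]

lemma srt_pow_apply (k : ℕ) :
    ((σ' * ρ * τ) ^ (2 * k)) ((1 : ℤ), (2 : ℤ)) = ((1 + 6 * k : ℤ), (2 - 6 * k : ℤ)) ∧
    ((σ' * ρ * τ) ^ (2 * k + 1)) ((1 : ℤ), (2 : ℤ)) = ((4 + 6 * k : ℤ), (-1 - 6 * k : ℤ)) := by
  induction k with
  | zero => constructor <;> simp [srt_apply]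
  | succ k ih =>
    obtain ⟨ih1, ih2⟩ := ih
    have e1 : 2 * (k + 1) = (2 * k + 1) + 1 := by ring
    have h1 : ((σ' * ρ * τ) ^ (2 * (k + 1))) ((1 : ℤ), (2 : ℤ)) =
        ((1 + 6 * (k + 1) : ℤ), (2 - 6 * (k + 1) : ℤ)) := by
      rw [e1, pow_succ', Equiv.Perm.mul_apply, ih2, srt_apply]
      simp only [Prod.mk.injEq]
      omega
    refine ⟨h1, ?_⟩
    rw [pow_succ', Equiv.Perm.mul_apply, h1, srt_apply]
    simp only [Prod.mk.injEq]
    omega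

lemma phi_w_apply (m : ℕ) :
    φ (r * t * (s * r * t) ^ m) (1, 2) = ρ (τ (((σ' * ρ * τ) ^ m) (1, 2))) := by
  rw [map_mul, map_mul, map_pow, map_mul, map_mul, φ_r, φ_s, φ_t]
  simp [Equiv.Perm.mul_apply]

lemma Nw_w (m : ℕ) : Nw (φ (r * t * (s * r * t) ^ m) (1, 2)) = 3 * m + 2 := by
  rw [phi_w_apply]
  rcases Nat.even_or_odd m with ⟨k, hk⟩ | ⟨k, hk⟩
  · have hk' : m = 2 * k := by omega
    subst hk'
    rw [(srt_pow_apply k).1]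
    simp only [τ_apply, ρ_apply, Nw]
    omega
  · subst hk
    rw [(srt_pow_apply k).2]
    simp only [τ_apply, ρ_apply, Nw]
    omega

lemma length_w_ge (m : ℕ) : 3 * m + 2 ≤ B2affCS.length (r * t * (s * r * t) ^ m) := by
  have := length_ge (r * t * (s * r * t) ^ m)
  rw [Nw_w] at this
  exact this

end B2aff

open B2aff in
/-- For every `m ≥ 1`, both `r` and `t` lie in the left and right descent sets of
`w = rt(srt)^m`: that is, `l(rw) < l(w)`, `l(tw) < l(w)`, `l(wr) < l(w)` and `l(wt) < l(w)`. -/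
theorem descents_rt_srt_pow (m : ℕ) (hm : 1 ≤ m) :
    B2affCS.length (r * (r * t * (s * r * t) ^ m)) < B2affCS.length (r * t * (s * r * t) ^ m) ∧
    B2affCS.length (t * (r * t * (s * r * t) ^ m)) < B2affCS.length (r * t * (s * r * t) ^ m) ∧
    B2affCS.length ((r * t * (s * r * t) ^ m) * r) < B2affCS.length (r * t * (s * r * t) ^ m) ∧
    B2affCS.length ((r * t * (s * r * t) ^ m) * t) < B2affCS.length (r * t * (s * r * t) ^ m) := by
  obtain ⟨m', rfl⟩ : ∃ m', m = m' + 1 := ⟨m - 1, by omega⟩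
  have hlow := length_w_ge (m' + 1)
  have hXlen := length_srt_pow (m' + 1)
  have hXlen' := length_srt_pow m'
  have key1 : s * r * t * r = s * t := by
    rw [mul_assoc (s * r) t r, ← rt_comm, ← mul_assoc (s * r) r t, mul_assoc s r r,
      r_mul_r, mul_one]
  have key2 : s * r * t * t = s * r := by
    rw [mul_assoc (s * r) t t, t_mul_t, mul_one]
  have eX : (s * r * t) ^ (m' + 1) = (s * r * t) ^ m' * (s * r * t) := pow_succ _ _
  have e1 : r * (r * t * (s * r * t) ^ (m' + 1)) = t * (s * r * t) ^ (m' + 1) := by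
    rw [← mul_assoc, ← mul_assoc, r_mul_r, one_mul]
  have e2 : t * (r * t * (s * r * t) ^ (m' + 1)) = r * (s * r * t) ^ (m' + 1) := by
    rw [← mul_assoc, ← mul_assoc, ← rt_comm, mul_assoc r t t, t_mul_t, mul_one]
  have e3 : (r * t * (s * r * t) ^ (m' + 1)) * r =
      r * t * ((s * r * t) ^ m' * (s * t)) := by
    rw [eX, mul_assoc (r * t) ((s * r * t) ^ m' * (s * r * t)) r,
      mul_assoc ((s * r * t) ^ m') (s * r * t) r, key1]
  have e4 : (r * t * (s * r * t) ^ (m' + 1)) * t =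
      r * t * ((s * r * t) ^ m' * (s * r)) := by
    rw [eX, mul_assoc (r * t) ((s * r * t) ^ m' * (s * r * t)) t,
      mul_assoc ((s * r * t) ^ m') (s * r * t) t, key2]
  have b1 : B2affCS.length (t * (s * r * t) ^ (m' + 1)) ≤ 3 * (m' + 1) + 1 := by
    have := B2affCS.length_mul_le t ((s * r * t) ^ (m' + 1))
    rw [length_t] at this
    omega
  have b2 : B2affCS.length (r * (s * r * t) ^ (m' + 1)) ≤ 3 * (m' + 1) + 1 := by
    have := B2affCS.length_mul_le r ((s * r * t) ^ (m' + 1))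
    rw [length_r] at this
    omega
  have hab : ∀ a b : B2affGroup, B2affCS.length a = 1 → B2affCS.length b = 1 →
      B2affCS.length (r * t * ((s * r * t) ^ m' * (a * b))) ≤ 3 * (m' + 1) + 1 := by
    intro a b ha hb
    have h1 := B2affCS.length_mul_le (r * t) ((s * r * t) ^ m' * (a * b))
    have h2 := B2affCS.length_mul_le ((s * r * t) ^ m') (a * b)
    have h3 := B2affCS.length_mul_le r t
    have h4 := B2affCS.length_mul_le a b
    rw [length_r, length_t] at h3
    rw [ha, hb] at h4
    omega
  have b3 := hab s t length_s length_t
  have b4 := hab s r length_s length_r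
  refine ⟨?_, ?_, ?_, ?_⟩
  · rw [e1]; omega
  · rw [e2]; omega
  · rw [e3]; omega
  · rw [e4]; omega
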